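/- With A(f) defined as {x : ∃ L ∈ ℕ, ∀ n ∈ ℕ, f^{n+L}(x) ∉ T(f^n(B(0,R)))} for a continuous open map f satisfying the covering property (1a), we have A(f^p) = A(f) for every p ∈ ℕ, p ≥ 1. -/

import Mathlib

open Set Metric Filter Bornology Topology

noncomputable section

/-- The topological hull `T(E)`: the union of `E` with all bounded connected
components of its complement. -/
def topHull {m : ℕ} (E : Set (EuclideanSpace ℝ (Fin m))) : Set (EuclideanSpace ℝ (Fin m)) :=
  E ∪ {x | IsBounded (connectedComponentIn Eᶜ x)}

/-- The covering property (1a): for each `R > R₀` there exist `r_n → ∞` with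
`B(0, r_n) ⊆ T(f^n(B(0,R)))`. -/
def CoveringProperty {m : ℕ} (f : EuclideanSpace ℝ (Fin m) → EuclideanSpace ℝ (Fin m))
    (R₀ : ℝ) : Prop :=
  ∀ R > R₀, ∃ r : ℕ → ℝ, Tendsto r atTop atTop ∧
    ∀ n : ℕ, ball (0 : EuclideanSpace ℝ (Fin m)) (r n) ⊆ topHull (f^[n] '' ball 0 R)

/-- The fast escaping set defined via radius `R`:
`A(f) = {x : ∃ L, ∀ n, f^{n+L}(x) ∉ T(f^n(B(0,R)))}`. -/
def fastEscaping {m : ℕ} (f : EuclideanSpace ℝ (Fin m) → EuclideanSpace ℝ (Fin m))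
    (R : ℝ) : Set (EuclideanSpace ℝ (Fin m)) :=
  {x | ∃ L : ℕ, ∀ n : ℕ, f^[n + L] x ∉ topHull (f^[n] '' ball (0 : EuclideanSpace ℝ (Fin m)) R)}

section Aux

variable {m : ℕ}

lemma subset_topHull (E : Set (EuclideanSpace ℝ (Fin m))) : E ⊆ topHull E :=
  subset_union_left

lemma topHull_mono {E F : Set (EuclideanSpace ℝ (Fin m))} (h : E ⊆ F) :
    topHull E ⊆ topHull F := by
  rintro x (hx | hx)
  · exact Or.inl (h hx)
  · by_cases hxF : x ∈ F
    · exact Or.inl hxF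
    · exact Or.inr ((show IsBounded (connectedComponentIn Eᶜ x) from hx).subset
        (connectedComponentIn_mono x (compl_subset_compl.2 h)))

lemma topHull_topHull (E : Set (EuclideanSpace ℝ (Fin m))) :
    topHull (topHull E) ⊆ topHull E := by
  rintro x (hx | hx)
  · exact hx
  · by_cases hC : IsBounded (connectedComponentIn Eᶜ x)
    · exact Or.inr hC
    by_cases hxT : x ∈ topHull E
    · exact hxT
    exfalso
    have hxE : x ∈ Eᶜ := fun hxE => hxT (Or.inl hxE)
    have hsub : connectedComponentIn Eᶜ x ⊆ (topHull E)ᶜ := by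
      intro y hy
      have hyE : y ∈ Eᶜ := connectedComponentIn_subset _ _ hy
      rintro (hyE' | hyb)
      · exact hyE hyE'
      · exact hC (by rwa [connectedComponentIn_eq hy])
    have hxsub := isPreconnected_connectedComponentIn.subset_connectedComponentIn
      (mem_connectedComponentIn hxE) hsub
    exact hC ((show IsBounded (connectedComponentIn (topHull E)ᶜ x) from hx).subset hxsub)

lemma frontier_image_subset {f : EuclideanSpace ℝ (Fin m) → EuclideanSpace ℝ (Fin m)}
    (hf : Continuous f) (ho : IsOpenMap f) {U : Set (EuclideanSpace ℝ (Fin m))}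
    (hUo : IsOpen U) (hU : IsBounded U) : frontier (f '' U) ⊆ f '' frontier U := by
  intro y hy
  have h1 : closure (f '' U) ⊆ f '' closure U :=
    closure_minimal (image_mono (f := f) subset_closure) (hU.isCompact_closure.image hf).isClosed
  have hyn : y ∉ f '' U := fun h => hy.2 (by rwa [IsOpen.interior_eq (ho U hUo)])
  obtain ⟨u, hu, rfl⟩ := h1 hy.1
  have huU : u ∉ U := fun h => hyn ⟨u, h, rfl⟩
  exact ⟨u, ⟨hu, fun h => huU (interior_subset h)⟩, rfl⟩

lemma exists_separating_open {E : Set (EuclideanSpace ℝ (Fin m))} (hE : IsOpen E)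
    {x : EuclideanSpace ℝ (Fin m)} (hx : x ∈ Eᶜ)
    (hb : IsBounded (connectedComponentIn Eᶜ x)) :
    ∃ U, IsOpen U ∧ IsBounded U ∧ connectedComponentIn Eᶜ x ⊆ U ∧ frontier U ⊆ E := by
  set C := connectedComponentIn Eᶜ x with hCdef
  obtain ⟨ρ, hρpos, hρ⟩ := hb.subset_ball_lt 0 0
  have hCball : C ⊆ ball 0 ρ := hρ
  set K := Eᶜ ∩ closedBall (0 : EuclideanSpace ℝ (Fin m)) ρ with hKdef
  have hKclosed : IsClosed K := (isClosed_compl_iff.2 hE).inter Metric.isClosed_closedBall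
  have hKcmp : IsCompact K :=
    Metric.isCompact_of_isClosed_isBounded hKclosed
      (isBounded_closedBall.subset inter_subset_right)
  have hxK : x ∈ K := ⟨hx, ball_subset_closedBall (hCball (mem_connectedComponentIn hx))⟩
  have hCK : C = connectedComponentIn K x := by
    apply Subset.antisymm
    · exact isPreconnected_connectedComponentIn.subset_connectedComponentIn
        (mem_connectedComponentIn hx)
        (fun y hy => ⟨connectedComponentIn_subset _ _ hy,
          ball_subset_closedBall (hCball hy)⟩)
    · exact connectedComponentIn_mono x inter_subset_left
  haveI : CompactSpace K := isCompact_iff_compactSpace.mp hKcmp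
  set x' : K := ⟨x, hxK⟩
  have himg : connectedComponentIn K x = (↑) '' connectedComponent x' :=
    connectedComponentIn_eq_image hxK
  set S' : Set K := (↑) ⁻¹' (sphere (0 : EuclideanSpace ℝ (Fin m)) ρ) with hS'def
  have hS'closed : IsClosed S' := isClosed_sphere.preimage continuous_subtype_val
  have hdisj : connectedComponent x' ∩ S' = ∅ := by
    rw [eq_empty_iff_forall_notMem]
    rintro z ⟨hz1, hz2⟩
    have hzC : (z : EuclideanSpace ℝ (Fin m)) ∈ C := by
      rw [hCK, himg]; exact mem_image_of_mem _ hz1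
    exact (mem_ball.1 (hCball hzC)).ne hz2
  have hccS : connectedComponent x' = ⋂ s : { s : Set K // IsClopen s ∧ x' ∈ s }, ↑s :=
    connectedComponent_eq_iInter_isClopen x'
  obtain ⟨t, ht⟩ := hS'closed.isCompact.elim_finite_subfamily_closed
    (fun s : { s : Set K // IsClopen s ∧ x' ∈ s } => (s : Set K)) (fun s => s.2.1.1)
    (by rw [← hccS, inter_comm]; exact hdisj)
  set V' : Set K := ⋂ i ∈ t, (i : Set K) with hV'def
  have hV'clopen : IsClopen V' := isClopen_biInter_finset fun i _ => i.2.1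
  have hccV' : connectedComponent x' ⊆ V' :=
    subset_iInter₂ fun i _ => i.2.1.connectedComponent_subset i.2.2
  have hV'S' : ∀ z ∈ V', z ∉ S' := fun z hz hzS =>
    (eq_empty_iff_forall_notMem.1 ht z) ⟨hzS, mem_iInter₂.2 fun i hi => mem_iInter₂.1 hz i hi⟩
  set V : Set (EuclideanSpace ℝ (Fin m)) := (↑) '' V' with hVdef
  have hVcmp : IsCompact V := (hV'clopen.isClosed.isCompact).image continuous_subtype_val
  set A : Set (EuclideanSpace ℝ (Fin m)) :=
    ((↑) '' (V'ᶜ)) ∪ sphere (0 : EuclideanSpace ℝ (Fin m)) ρ with hAdef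
  have hAcmp : IsCompact A :=
    ((hV'clopen.isOpen.isClosed_compl.isCompact).image continuous_subtype_val).union
      (isCompact_sphere _ _)
  have hVA : Disjoint V A := by
    rw [Set.disjoint_left]
    rintro a ⟨z, hz, rfl⟩ (⟨w, hw, hwz⟩ | hs)
    · exact hw (by rw [Subtype.coe_injective hwz]; exact hz)
    · exact hV'S' z hz hs
  have hVball : V ⊆ ball 0 ρ := by
    rintro a ⟨z, hz, rfl⟩
    exact mem_ball.2 ((mem_closedBall.1 z.2.2).lt_of_ne fun h => hV'S' z hz h)
  obtain ⟨δ, hδpos, hδdisj⟩ := hVA.exists_cthickenings hVcmp hAcmp.isClosed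
  have hUo : IsOpen (thickening δ V ∩ ball 0 ρ) := isOpen_thickening.inter isOpen_ball
  refine ⟨thickening δ V ∩ ball 0 ρ, hUo, isBounded_ball.subset inter_subset_right, ?_, ?_⟩
  · have hCV : C ⊆ V := by rw [hCK, himg]; exact image_mono hccV'
    exact fun y hy => ⟨self_subset_thickening hδpos V (hCV hy), hCball hy⟩
  · intro y hy
    have hyU : y ∉ thickening δ V ∩ ball 0 ρ := fun h => hy.2 (by rwa [hUo.interior_eq])
    have h1 : y ∈ cthickening δ V :=
      closure_thickening_subset_cthickening δ V ((closure_mono inter_subset_left) hy.1)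
    have h2 : y ∈ closedBall (0 : EuclideanSpace ℝ (Fin m)) ρ :=
      closure_ball_subset_closedBall ((closure_mono inter_subset_right) hy.1)
    by_contra hyE
    have hyK : y ∈ K := ⟨hyE, h2⟩
    by_cases hyV' : (⟨y, hyK⟩ : K) ∈ V'
    · exact hyU ⟨self_subset_thickening hδpos V (mem_image_of_mem _ hyV'),
        hVball (mem_image_of_mem _ hyV')⟩
    · exact Set.disjoint_left.1 hδdisj h1
        (self_subset_cthickening A (Or.inl (mem_image_of_mem Subtype.val
          (show (⟨y, hyK⟩ : K) ∈ V'ᶜ from hyV'))))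

/-- Key lemma: for a continuous open map, the image of the hull is inside the hull of the
image, for open sets. -/
lemma image_topHull_subset {f : EuclideanSpace ℝ (Fin m) → EuclideanSpace ℝ (Fin m)}
    (hf : Continuous f) (ho : IsOpenMap f) {E : Set (EuclideanSpace ℝ (Fin m))}
    (hE : IsOpen E) : f '' topHull E ⊆ topHull (f '' E) := by
  rintro _ ⟨x, hx, rfl⟩
  by_cases hxE : x ∈ E
  · exact Or.inl (mem_image_of_mem f hxE)
  have hxc : x ∈ Eᶜ := hxE
  have hb : IsBounded (connectedComponentIn Eᶜ x) := by
    rcases hx with hx | hx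
    · exact absurd hx hxE
    · exact hx
  obtain ⟨U, hUo, hUb, hCU, hfr⟩ := exists_separating_open hE hxc hb
  by_cases hfx : f x ∈ f '' E
  · exact Or.inl hfx
  right
  have hfxc : f x ∈ (f '' E)ᶜ := hfx
  have hfrE : frontier (f '' U) ⊆ f '' E :=
    (frontier_image_subset hf ho hUo hUb).trans (image_mono (f := f) hfr)
  have hDsub : connectedComponentIn (f '' E)ᶜ (f x) ⊆ f '' U ∪ (closure (f '' U))ᶜ := by
    intro y hy
    by_cases h1 : y ∈ f '' U
    · exact Or.inl h1
    · refine Or.inr fun hyc => ?_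
      have : y ∈ frontier (f '' U) := by
        rw [(ho U hUo).frontier_eq]; exact ⟨hyc, h1⟩
      exact connectedComponentIn_subset _ _ hy (hfrE this)
  have hDU : connectedComponentIn (f '' E)ᶜ (f x) ⊆ f '' U := by
    refine IsPreconnected.subset_left_of_subset_union (ho U hUo)
      isClosed_closure.isOpen_compl ?_ hDsub
      ⟨f x, mem_connectedComponentIn hfxc, mem_image_of_mem f (hCU (mem_connectedComponentIn hxc))⟩
      isPreconnected_connectedComponentIn
    exact disjoint_compl_right.mono_left subset_closure
  exact ((hUb.isCompact_closure.image hf).isBounded.subset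
    (hDU.trans (image_mono (f := f) subset_closure)))

lemma isOpenMap_iterate {f : EuclideanSpace ℝ (Fin m) → EuclideanSpace ℝ (Fin m)}
    (ho : IsOpenMap f) : ∀ n, IsOpenMap f^[n]
  | 0 => IsOpenMap.id
  | n + 1 => by
    rw [Function.iterate_succ]
    exact (isOpenMap_iterate ho n).comp ho

lemma iter_mem_topHull {f : EuclideanSpace ℝ (Fin m) → EuclideanSpace ℝ (Fin m)}
    (hf : Continuous f) (ho : IsOpenMap f) {B : Set (EuclideanSpace ℝ (Fin m))}
    (hB : IsOpen B) (j : ℕ) :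
    ∀ (n : ℕ) (y : EuclideanSpace ℝ (Fin m)), y ∈ topHull (f^[n] '' B) →
      f^[j] y ∈ topHull (f^[n + j] '' B) := by
  induction j with
  | zero => intro n y hy; simpa using hy
  | succ j ih =>
    intro n y hy
    have h1 : f^[j] y ∈ topHull (f^[n + j] '' B) := ih n y hy
    have h2 : f (f^[j] y) ∈ topHull (f '' (f^[n + j] '' B)) :=
      image_topHull_subset hf ho ((isOpenMap_iterate ho (n + j)) B hB)
        (mem_image_of_mem f h1)
    have h3 : f '' (f^[n + j] '' B) = f^[n + j + 1] '' B := by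
      rw [← Set.image_comp, ← Function.iterate_succ']
    rw [Function.iterate_succ_apply']
    have : n + (j + 1) = n + j + 1 := by ring
    rw [this, ← h3]
    exact h2

end Aux

theorem fastEscaping_iterate {m : ℕ}
    (f : EuclideanSpace ℝ (Fin m) → EuclideanSpace ℝ (Fin m))
    (hf : Continuous f) (hopen : IsOpenMap f)
    (R₀ : ℝ) (hcov : CoveringProperty f R₀)
    (R : ℝ) (hR : R₀ < R) (p : ℕ) (hp : 1 ≤ p) :
    fastEscaping (f^[p]) R = fastEscaping f R := by
  set B : Set (EuclideanSpace ℝ (Fin m)) := ball 0 R with hBdef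
  have hBo : IsOpen B := isOpen_ball
  set T : ℕ → Set (EuclideanSpace ℝ (Fin m)) := fun n => topHull (f^[n] '' B) with hTdef
  -- shift monotonicity
  obtain ⟨r, hrT, hrB⟩ := hcov R hR
  obtain ⟨N, hN⟩ := (Filter.eventually_atTop).1 (hrT.eventually_ge_atTop R)
  have hSM : ∀ a k, N ≤ k → T a ⊆ T (a + k) := by
    intro a k hk
    have h1 : B ⊆ T k := (ball_subset_ball (hN k hk)).trans (hrB k)
    have h2 : f^[a] '' B ⊆ T (k + a) := by
      rintro _ ⟨y, hy, rfl⟩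
      exact iter_mem_topHull hf hopen hBo a k y (h1 hy)
    calc T a ⊆ topHull (T (k + a)) := topHull_mono h2
      _ ⊆ T (k + a) := topHull_topHull _
      _ = T (a + k) := by rw [Nat.add_comm]
  -- rewrite iterates of f^[p]
  have hiter : ∀ n : ℕ, (f^[p])^[n] = f^[p * n] := fun n => (Function.iterate_mul f p n).symm
  ext x
  constructor
  · -- A(f^p) ⊆ A(f)
    rintro ⟨L, h⟩
    refine ⟨p * L, fun n hmem => ?_⟩
    have hpn : n ≤ p * n := Nat.le_mul_of_pos_left n hp
    have h2 : f^[p * n - n] (f^[n + p * L] x) ∈ T (n + (p * n - n)) :=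
      iter_mem_topHull hf hopen hBo (p * n - n) n _ hmem
    have e1 : n + (p * n - n) = p * n := by omega
    have e2 : f^[p * n - n] (f^[n + p * L] x) = f^[p * (n + L)] x := by
      rw [← Function.iterate_add_apply]
      congr 1
      have : p * (n + L) = p * n + p * L := by ring
      omega
    rw [e1, e2] at h2
    have := h n
    rw [hiter (n + L), hiter n] at this
    exact this h2
  · -- A(f) ⊆ A(f^p)
    rintro ⟨L, h⟩
    refine ⟨L + N, fun n hmem => ?_⟩
    rw [hiter (n + (L + N)), hiter n] at hmem
    have hLN : L + N ≤ p * (L + N) := Nat.le_mul_of_pos_left _ hp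
    have hmem2 : f^[p * (n + (L + N))] x ∈ T (p * n + (p * (L + N) - L)) := by
      apply hSM (p * n) (p * (L + N) - L) (by omega)
      exact hmem
    have := h (p * n + (p * (L + N) - L))
    have e3 : p * n + (p * (L + N) - L) + L = p * (n + (L + N)) := by
      have : p * (n + (L + N)) = p * n + p * (L + N) := by ring
      omega
    rw [e3] at this
    exact this hmem2
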